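/- Let (bⱼ)_{j≥1} be a non-increasing sequence of positive real numbers and let (aⱼ)_{j≥1} be a sequence of real numbers such that Σⱼ |aⱼ| < ∞ and Σⱼ aⱼ bⱼ > 0. Then there exists a finite N ∈ ℕ such that Σ_{j=1}^{N} aⱼ > 0. -/

import Mathlib

open Filter

/-- If `(bⱼ)` is a non-increasing sequence of positive reals and `(aⱼ)` is
absolutely summable with `Σⱼ aⱼ bⱼ > 0`, then some finite partial sum of `(aⱼ)` is positive. -/
theorem statement_13
    (a b : ℕ → ℝ)
    (hbpos : ∀ j, 0 < b j)
    (hbanti : Antitone b)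
    (ha : Summable fun j => |a j|)
    (hab : 0 < ∑' j, a j * b j) :
    ∃ N : ℕ, 0 < ∑ j ∈ Finset.range N, a j := by
  by_contra h
  push_neg at h
  -- summability of a*b
  have hsum : Summable fun j => a j * b j := by
    apply Summable.of_norm_bounded (ha.mul_right (b 0))
    intro j
    rw [Real.norm_eq_abs, abs_mul, abs_of_pos (hbpos j)]
    exact mul_le_mul_of_nonneg_left (hbanti (Nat.zero_le j)) (abs_nonneg _)
  -- each partial sum of a*b is ≤ 0
  have hpart : ∀ n, ∑ j ∈ Finset.range n, a j * b j ≤ 0 := by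
    intro n
    have := Finset.sum_range_by_parts b a n
    simp only [smul_eq_mul] at this
    rw [Finset.sum_congr rfl (fun j _ => mul_comm (a j) (b j)), this]
    have h1 : b (n - 1) * ∑ i ∈ Finset.range n, a i ≤ 0 :=
      mul_nonpos_of_nonneg_of_nonpos (hbpos _).le (h n)
    have h2 : 0 ≤ ∑ i ∈ Finset.range (n - 1), (b (i + 1) - b i) * ∑ j ∈ Finset.range (i + 1), a j := by
      apply Finset.sum_nonneg
      intro i _
      have := mul_nonneg (neg_nonneg.2 (sub_nonpos.2 (hbanti (Nat.le_succ i)))) (neg_nonneg.2 (h (i+1)))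
      nlinarith [this]
    linarith
  -- tsum ≤ 0
  have : Tendsto (fun n => ∑ j ∈ Finset.range n, a j * b j) atTop (nhds (∑' j, a j * b j)) :=
    hsum.hasSum.tendsto_sum_nat
  have := le_of_tendsto' this hpart
  linarith
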